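/- Let U ⊆ ℝⁿ be an open convex set and let f : U → ℝ be a convex function which is differentiable at every point of U. Let a, b ∈ U and suppose f is affine on the segment [a,b], i.e. f((1−λ)a + λb) = (1−λ)f(a) + λf(b) for all λ ∈ [0,1]. Then the derivatives of f at a and b coincide: ∇f(a) = ∇f(b). -/

import Mathlib

open Set InnerProductSpace

/-- If a convex function, differentiable on an open convex set `U ⊆ ℝⁿ`, is affine on the
segment `[a,b] ⊆ U`, then its derivatives at the two endpoints coincide. -/
theorem stmt4 (n : ℕ) (U : Set (EuclideanSpace ℝ (Fin n))) (hUo : IsOpen U)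
    (hUc : Convex ℝ U) (f : EuclideanSpace ℝ (Fin n) → ℝ) (hf : ConvexOn ℝ U f)
    (hdiff : ∀ x ∈ U, DifferentiableAt ℝ f x)
    (a b : EuclideanSpace ℝ (Fin n)) (ha : a ∈ U) (hb : b ∈ U)
    (haff : ∀ l ∈ Set.Icc (0 : ℝ) 1,
      f ((1 - l) • a + l • b) = (1 - l) * f a + l * f b) :
    gradient f a = gradient f b := by
  set g := gradient f a with hg
  have hfa : HasFDerivAt f (toDual ℝ _ g) a :=
    hasGradientAt_iff_hasFDerivAt.mp (hdiff a ha).hasGradientAt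
  -- the affine support candidate
  set φ : EuclideanSpace ℝ (Fin n) → ℝ :=
    fun x => f a - (inner ℝ g a : ℝ) + (inner ℝ g x : ℝ) with hφ
  have hφa : φ a = f a := by simp [hφ]
  have hφd : ∀ x, HasFDerivAt φ (toDual ℝ _ g) x := by
    intro x
    have h1 : HasFDerivAt (fun y : EuclideanSpace ℝ (Fin n) => (inner ℝ g y : ℝ))
        (innerSL ℝ g) x := (innerSL ℝ g).hasFDerivAt
    have h2 : (innerSL ℝ g : EuclideanSpace ℝ (Fin n) →L[ℝ] ℝ) = toDual ℝ _ g := by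
      ext y; simp [toDual_apply_apply]
    rw [← h2]
    exact h1.const_add _
  set G : EuclideanSpace ℝ (Fin n) → ℝ := fun x => f x - φ x with hG
  have hGa0 : G a = 0 := by simp [hG, hφa]
  have hGa : HasFDerivAt G (0 : EuclideanSpace ℝ (Fin n) →L[ℝ] ℝ) a := by
    have := hfa.sub (hφd a)
    rw [sub_self] at this; exact this
  -- a tangent-cone fact on `Ici 0`
  have hone : (1 : ℝ) ∈ posTangentConeAt (Ici (0 : ℝ)) 0 := by
    have : segment ℝ (0 : ℝ) (0 + 1) ⊆ Ici 0 := by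
      rw [segment_eq_Icc (by norm_num)]
      intro t ht; exact ht.1
    simpa using mem_posTangentConeAt_of_segment_subset this
  have hmem : Icc (0 : ℝ) 1 ∈ nhdsWithin (0 : ℝ) (Ici 0) := by
    rw [show Icc (0 : ℝ) 1 = Ici 0 ∩ Iic 1 by rw [Ici_inter_Iic]]
    exact inter_mem_nhdsWithin _ (Iic_mem_nhds one_pos)
  -- derivative of G along a segment from a
  have hline : ∀ x : EuclideanSpace ℝ (Fin n),
      HasDerivAt (fun t : ℝ => a + t • (x - a)) (x - a) 0 := by
    intro x
    have := ((hasDerivAt_id (0 : ℝ)).smul_const (x - a)).const_add a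
    simpa using this
  have hcomp : ∀ x : EuclideanSpace ℝ (Fin n),
      HasDerivAt (fun t : ℝ => G (a + t • (x - a))) 0 0 := by
    intro x
    have hGa' : HasFDerivAt G (0 : EuclideanSpace ℝ (Fin n) →L[ℝ] ℝ)
        (a + (0 : ℝ) • (x - a)) := by simpa using hGa
    have := hGa'.comp_hasDerivAt (0 : ℝ) (hline x)
    simp only [ContinuousLinearMap.zero_apply] at this; exact this
  have hseg : ∀ x : EuclideanSpace ℝ (Fin n), ∀ t : ℝ,
      a + t • (x - a) = (1 - t) • a + t • x := by
    intro x t; module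
  have hφseg : ∀ x : EuclideanSpace ℝ (Fin n), ∀ t : ℝ,
      φ (a + t • (x - a)) = (1 - t) * φ a + t * φ x := by
    intro x t
    simp only [hφ, inner_add_right, inner_smul_right, inner_sub_right]
    ring
  -- support: G ≥ 0 on U
  have hsupp : ∀ x ∈ U, 0 ≤ G x := by
    intro x hx
    set q : ℝ → ℝ := fun t => G (a + t • (x - a)) - t * G x with hq
    have hq' : HasDerivAt q (0 - G x) 0 :=
      (hcomp x).sub (by simpa using (hasDerivAt_id (0 : ℝ)).mul_const (G x))
    have hmax : IsLocalMaxOn q (Ici (0 : ℝ)) 0 := by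
      apply Filter.eventually_iff_exists_mem.mpr ⟨Icc 0 1, hmem, ?_⟩
      intro t ht
      have hfle : f ((1 - t) • a + t • x) ≤ (1 - t) * f a + t * f x :=
        hf.2 ha hx (by linarith [ht.2]) ht.1 (by ring)
      have h0 : q 0 = 0 := by simp [hq, hGa0]
      have h1 : q t = f (a + t • (x - a)) - ((1 - t) * f a + t * f x) := by
        simp only [hq, hG, hφseg x t, hφa]
        ring
      show q t ≤ q 0
      rw [h0, h1, hseg x t]
      linarith
    have := hmax.hasFDerivWithinAt_nonpos
      (hq'.hasDerivWithinAt.hasFDerivWithinAt) hone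
    simpa using this
  -- G b = 0
  have hGb : G b = 0 := by
    have heq : (fun t : ℝ => t * G b) =ᶠ[nhdsWithin (0 : ℝ) (Ici 0)]
        (fun t : ℝ => G (a + t • (b - a))) := by
      filter_upwards [hmem] with t ht
      have hab := haff t ht
      show t * G b = G (a + t • (b - a))
      have h2 : G (a + t • (b - a)) = f (a + t • (b - a)) - ((1 - t) * f a + t * φ b) := by
        simp only [hG, hφseg b t, hφa]
      rw [h2, hseg b t, hab]
      simp only [hG]
      ring
    have hupper : HasDerivWithinAt (fun t : ℝ => t * G b) 0 (Ici 0) 0 :=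
      ((hcomp b).hasDerivWithinAt (s := Ici 0)).congr_of_eventuallyEq heq (by simp [hGa0])
    have hlin : HasDerivWithinAt (fun t : ℝ => t * G b) (G b) (Ici 0) 0 := by
      simpa using ((hasDerivAt_id (0 : ℝ)).mul_const (G b)).hasDerivWithinAt (s := Ici 0)
    have := (uniqueDiffOn_Ici (0 : ℝ) 0 self_mem_Ici).eq_deriv _ hupper hlin
    linarith [this]
  -- Fermat at b
  have hmin : IsLocalMin G b := by
    have : ∀ᶠ x in nhds b, G b ≤ G x := by
      filter_upwards [hUo.mem_nhds hb] with x hx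
      rw [hGb]; exact hsupp x hx
    exact this
  have hfb : HasFDerivAt f (toDual ℝ _ (gradient f b)) b :=
    hasGradientAt_iff_hasFDerivAt.mp (hdiff b hb).hasGradientAt
  have hGb' : HasFDerivAt G (toDual ℝ _ (gradient f b) - toDual ℝ _ g) b :=
    hfb.sub (hφd b)
  have hzero := hmin.hasFDerivAt_eq_zero hGb'
  have h3 : toDual ℝ _ (gradient f b) = toDual ℝ _ g := by
    rwa [sub_eq_zero] at hzero
  exact ((toDual ℝ _).injective h3).symm
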